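/- Let g be the Sensitivity-Preprocessing Function of f: 𝒟 → ℝ with nonnegative parameters {Δ_i}. For any database D with f(D) ≠ g(D): if f(D) > g(D), then there exists a strict subset D̃ ⊂ D such that g(D) ≥ f(D̃) + ∑_{i ∈ D ∖ D̃} Δ_i; and symmetrically if f(D) < g(D), there exists D̃ ⊂ D with g(D) ≤ f(D̃) − ∑_{i ∈ D ∖ D̃} Δ_i. -/

import Mathlib

variable {α : Type*} [DecidableEq α]

/-- The Sensitivity-Preprocessing Function of `f` with individual sensitivity
parameters `Δ`: `g ∅ = f ∅`, and for nonempty `D`, `g D = Upper D` if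
`Upper D ≤ f D`, `g D = Lower D` if `Lower D ≥ f D`, and `g D = f D` otherwise,
where `Upper D = min_{a ∈ D} (g (D.erase a) + Δ a)` and
`Lower D = max_{a ∈ D} (g (D.erase a) - Δ a)`. -/
noncomputable def SPF (f : Finset α → ℝ) (Δ : α → ℝ) : Finset α → ℝ := fun D =>
  if h : D.Nonempty then
    let U : ℝ := D.attach.inf' (Finset.attach_nonempty_iff.mpr h)
      (fun a => SPF f Δ (D.erase a.1) + Δ a.1)
    let L : ℝ := D.attach.sup' (Finset.attach_nonempty_iff.mpr h)
      (fun a => SPF f Δ (D.erase a.1) - Δ a.1)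
    if U ≤ f D then U
    else if f D ≤ L then L
    else f D
  else f ∅
termination_by D => D.card
decreasing_by all_goals exact Finset.card_erase_lt_of_mem a.2

lemma sum_sdiff_erase (Δ : α → ℝ) {D D' : Finset α} {a : α} (ha : a ∈ D)
    (hD' : D' ⊆ D.erase a) :
    ∑ x ∈ D \ D', Δ x = Δ a + ∑ x ∈ (D.erase a) \ D', Δ x := by
  have haD' : a ∉ D' := fun h => (Finset.mem_erase.mp (hD' h)).1 rfl
  have hset : D \ D' = insert a ((D.erase a) \ D') := by
    ext x
    simp only [Finset.mem_sdiff, Finset.mem_insert, Finset.mem_erase]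
    constructor
    · rintro ⟨hx, hx'⟩
      by_cases hxa : x = a
      · exact Or.inl hxa
      · exact Or.inr ⟨⟨hxa, hx⟩, hx'⟩
    · rintro (rfl | ⟨⟨_, hx⟩, hx'⟩)
      · exact ⟨ha, haD'⟩
      · exact ⟨hx, hx'⟩
  rw [hset, Finset.sum_insert (by simp)]

/-- If `f D ≠ g D` then there is a strict subset `D̃ ⊂ D` witnessing that `g D`
is pinned by the sensitivity constraints: `g D ≥ f D̃ + ∑_{a ∈ D ∖ D̃} Δ a` when
`f D > g D`, and symmetrically when `f D < g D`. -/
theorem stmt13 (f : Finset α → ℝ) (Δ : α → ℝ) (hΔ : ∀ a, 0 ≤ Δ a) (D : Finset α)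
    (hne : f D ≠ SPF f Δ D) :
    (SPF f Δ D < f D →
      ∃ D' : Finset α, D' ⊂ D ∧ f D' + ∑ a ∈ D \ D', Δ a ≤ SPF f Δ D) ∧
    (f D < SPF f Δ D →
      ∃ D' : Finset α, D' ⊂ D ∧ SPF f Δ D ≤ f D' - ∑ a ∈ D \ D', Δ a) := by
  induction D using Finset.strongInduction with
  | _ D ih =>
  have hD : D.Nonempty := by
    by_contra h
    rw [Finset.not_nonempty_iff_eq_empty] at h
    subst h
    apply hne
    rw [SPF]
    simp
  -- key: if g D < f D then g D = g (erase a) + Δ a for some a ∈ D, symmetrically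
  have key : (SPF f Δ D < f D → ∃ a ∈ D, SPF f Δ D = SPF f Δ (D.erase a) + Δ a) ∧
      (f D < SPF f Δ D → ∃ a ∈ D, SPF f Δ D = SPF f Δ (D.erase a) - Δ a) := by
    rw [SPF, dif_pos hD]
    set U := D.attach.inf' (Finset.attach_nonempty_iff.mpr hD)
      (fun a => SPF f Δ (D.erase a.1) + Δ a.1) with hU
    set L := D.attach.sup' (Finset.attach_nonempty_iff.mpr hD)
      (fun a => SPF f Δ (D.erase a.1) - Δ a.1) with hL
    dsimp only
    split_ifs with h1 h2
    · constructor
      · intro _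
        obtain ⟨b, _, hb⟩ := Finset.exists_mem_eq_inf' (Finset.attach_nonempty_iff.mpr hD)
          (fun a => SPF f Δ (D.erase a.1) + Δ a.1)
        exact ⟨b.1, b.2, by rw [← hU] at hb; exact hb⟩
      · intro hlt; exact absurd (lt_of_lt_of_le hlt h1) (lt_irrefl _)
    · constructor
      · intro hlt; exact absurd (lt_of_le_of_lt h2 hlt) (lt_irrefl _)
      · intro _
        obtain ⟨b, _, hb⟩ := Finset.exists_mem_eq_sup' (Finset.attach_nonempty_iff.mpr hD)
          (fun a => SPF f Δ (D.erase a.1) - Δ a.1)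
        exact ⟨b.1, b.2, by rw [← hL] at hb; exact hb⟩
    · constructor
      · intro hlt; exact absurd hlt (lt_irrefl _)
      · intro hlt; exact absurd hlt (lt_irrefl _)
  constructor
  · intro hlt
    obtain ⟨a, haD, hge⟩ := key.1 hlt
    set E := D.erase a with hE
    have hEsub : E ⊂ D := Finset.erase_ssubset haD
    by_cases hfE : f E ≤ SPF f Δ E
    · refine ⟨E, hEsub, ?_⟩
      rw [sum_sdiff_erase Δ haD (le_refl _)]
      have : (E : Finset α) \ E = ∅ := Finset.sdiff_self E
      rw [← hE, this, Finset.sum_empty, add_zero, hge]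
      linarith
    · push_neg at hfE
      have hneE : f E ≠ SPF f Δ E := ne_of_gt hfE
      obtain ⟨D', hD'sub, hD'le⟩ := (ih E hEsub hneE).1 hfE
      refine ⟨D', hD'sub.trans hEsub, ?_⟩
      rw [sum_sdiff_erase Δ haD hD'sub.subset, ← hE, hge]
      linarith
  · intro hlt
    obtain ⟨a, haD, hge⟩ := key.2 hlt
    set E := D.erase a with hE
    have hEsub : E ⊂ D := Finset.erase_ssubset haD
    by_cases hfE : SPF f Δ E ≤ f E
    · refine ⟨E, hEsub, ?_⟩
      rw [sum_sdiff_erase Δ haD (le_refl _)]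
      have : (E : Finset α) \ E = ∅ := Finset.sdiff_self E
      rw [← hE, this, Finset.sum_empty, add_zero, hge]
      linarith
    · push_neg at hfE
      have hneE : f E ≠ SPF f Δ E := ne_of_lt hfE
      obtain ⟨D', hD'sub, hD'le⟩ := (ih E hEsub hneE).2 hfE
      refine ⟨D', hD'sub.trans hEsub, ?_⟩
      rw [sum_sdiff_erase Δ haD hD'sub.subset, ← hE, hge]
      linarith
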